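/- The family (Q_φ), indexed by all states φ : E → Σₙ, is a basis of R_E as a ℂ-vector space; in particular dim_ℂ R_E = n^{|E|}. -/

import Mathlib

open Polynomial

/- ### Auxiliary single-variable lemmas -/

lemma vanish_dvd (s : Finset ℂ) (r : Polynomial ℂ) (h : ∀ α ∈ s, r.eval α = 0) :
    (∏ α ∈ s, (X - C α)) ∣ r := by
  induction s using Finset.induction_on generalizing r with
  | empty => simp
  | @insert a s ha ih =>
    obtain ⟨r', hr'⟩ := (dvd_iff_isRoot (p := r)).2 (h a (Finset.mem_insert_self a s))
    rw [Finset.prod_insert ha, hr']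
    refine mul_dvd_mul_left _ (ih r' fun α hα => ?_)
    have h0 := h α (Finset.mem_insert_of_mem hα)
    rw [hr'] at h0
    simp only [eval_mul, eval_sub, eval_X, eval_C] at h0
    have hne : α - a ≠ 0 := sub_ne_zero.2 (by rintro rfl; exact ha hα)
    exact (mul_eq_zero.1 h0).resolve_left hne

lemma cβ_ne (n : ℕ) (S : Finset ℂ) (β : ℂ) :
    ((n : ℂ) + 1) * ∏ α ∈ S.erase β, (β - α) ≠ 0 := by
  refine mul_ne_zero (Nat.cast_add_one_ne_zero n) (Finset.prod_ne_zero_iff.2 fun α hα => ?_)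
  exact sub_ne_zero.2 fun h => (Finset.mem_erase.1 hα).1 h.symm

section OneVar
variable (n : ℕ) (w : Polynomial ℂ) (S : Finset ℂ)
  (hder : derivative w = C ((n : ℂ) + 1) * ∏ α ∈ S, (X - C α))
  (q : ℂ → Polynomial ℂ)
  (hq : ∀ β ∈ S,
    (X - C β) * (C (((n : ℂ) + 1) * ∏ α ∈ S.erase β, (β - α)) * q β) = derivative w)

include hder hq

lemma q_eq (β : ℂ) (hβ : β ∈ S) :
    C (((n : ℂ) + 1) * ∏ α ∈ S.erase β, (β - α)) * q β
      = C ((n : ℂ) + 1) * ∏ α ∈ S.erase β, (X - C α) := by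
  have h1 := hq β hβ
  rw [hder, ← Finset.mul_prod_erase S _ hβ] at h1
  have h1' : (X - C β) * (C (((n : ℂ) + 1) * ∏ α ∈ S.erase β, (β - α)) * q β)
      = (X - C β) * (C ((n : ℂ) + 1) * ∏ α ∈ S.erase β, (X - C α)) := by rw [h1]; ring
  exact mul_left_cancel₀ (X_sub_C_ne_zero β) h1'

lemma q_eval (α β : ℂ) (hα : α ∈ S) (hβ : β ∈ S) :
    (q β).eval α = if α = β then 1 else 0 := by
  have hc := cβ_ne n S β
  have h2 := congrArg (eval α) (q_eq n w S hder q hq β hβ)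
  simp only [eval_mul, eval_C, eval_prod, eval_sub, eval_X] at h2
  split_ifs with h
  · subst h
    exact mul_left_cancel₀ hc (by rw [mul_one]; linear_combination h2)
  · have h3 : ∏ γ ∈ S.erase β, (α - γ) = 0 :=
      Finset.prod_eq_zero (Finset.mem_erase.2 ⟨h, hα⟩) (sub_self α)
    rw [h3, mul_zero] at h2
    exact (mul_eq_zero.1 h2).resolve_left hc

lemma interp (p : Polynomial ℂ) :
    ∃ g, p = (∑ β ∈ S, C (p.eval β) * q β) + derivative w * g := by
  set r := p - ∑ β ∈ S, C (p.eval β) * q β with hr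
  have hvan : ∀ α ∈ S, r.eval α = 0 := by
    intro α hα
    have hterm : ∀ β ∈ S, (C (p.eval β) * q β).eval α = if α = β then p.eval β else 0 := by
      intro β hβ
      rw [eval_mul, eval_C, q_eval n w S hder q hq α β hα hβ]
      split_ifs <;> simp
    have h4 : r.eval α = p.eval α - ∑ β ∈ S, if α = β then p.eval β else 0 := by
      rw [hr, eval_sub, eval_finset_sum, Finset.sum_congr rfl hterm]
    rw [h4, Finset.sum_ite_eq S α, if_pos hα, sub_self]
  obtain ⟨g, hg⟩ := vanish_dvd S r hvan
  refine ⟨C (((n : ℂ) + 1)⁻¹) * g, ?_⟩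
  have hwr : derivative w * (C (((n : ℂ) + 1)⁻¹) * g) = r := by
    rw [hder, hg,
      show C ((n : ℂ) + 1) * (∏ α ∈ S, (X - C α)) * (C (((n : ℂ) + 1)⁻¹) * g)
        = (C ((n : ℂ) + 1) * C (((n : ℂ) + 1)⁻¹)) * ((∏ α ∈ S, (X - C α)) * g) by ring,
      ← C_mul, mul_inv_cancel₀ (Nat.cast_add_one_ne_zero n), C_1, one_mul]
  rw [hwr, hr]; ring

end OneVar

lemma prod_smul_c {ι : Type*} {A : Type*} [CommMonoid A] [MulAction ℂ A]
    [IsScalarTower ℂ A A] [SMulCommClass ℂ A A]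
    (s : Finset ι) (b : ι → ℂ) (f : ι → A) :
    ∏ i ∈ s, b i • f i = (∏ i ∈ s, b i) • ∏ i ∈ s, f i := by
  classical
  induction s using Finset.cons_induction_on with
  | empty => simp
  | @cons _ _ hj ih =>
    rw [Finset.prod_cons, Finset.prod_cons, Finset.prod_cons, ih, smul_mul_smul_comm]

/-- The ring `R_E = ℂ[X_e : e ∈ E] / (w'(X_e) : e ∈ E)`. -/
noncomputable abbrev stateRing (w : Polynomial ℂ) (E : Type) :=
  MvPolynomial E ℂ ⧸
    Ideal.span (Set.range fun e : E =>
      Polynomial.aeval (MvPolynomial.X e : MvPolynomial E ℂ) (derivative w))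

/-- The element `Q_φ = ∏_{e∈E} q_{φ(e)}(X_e)` of `R_E` associated to a state
`φ : E → Σₙ = S`. -/
noncomputable def Qstate (w : Polynomial ℂ) (q : ℂ → Polynomial ℂ) (E : Type) [Fintype E]
    (S : Finset ℂ) (φ : E → {x : ℂ // x ∈ S}) : stateRing w E :=
  Ideal.Quotient.mk _
    (∏ e : E, Polynomial.aeval (MvPolynomial.X e : MvPolynomial E ℂ) (q (φ e)))

lemma gen_zero (w : Polynomial ℂ) (E : Type) (e : E) :
    (Ideal.Quotient.mk _ (Polynomial.aeval (MvPolynomial.X e : MvPolynomial E ℂ)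
      (derivative w)) : stateRing w E) = 0 := by
  rw [Ideal.Quotient.eq_zero_iff_mem]
  exact Ideal.subset_span ⟨e, rfl⟩

section MultiVar
variable (w : Polynomial ℂ) (S : Finset ℂ) (q : ℂ → Polynomial ℂ)
  (E : Type) [Fintype E] [DecidableEq E]

omit [Fintype E] [DecidableEq E] in
lemma key (e : E) (p : Polynomial ℂ)
    (hi : ∃ g, p = (∑ β ∈ S, C (p.eval β) * q β) + derivative w * g) :
    (Ideal.Quotient.mk _ (Polynomial.aeval (MvPolynomial.X e : MvPolynomial E ℂ) p)
        : stateRing w E)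
      = ∑ β : {x : ℂ // x ∈ S}, (p.eval ↑β) •
          (Ideal.Quotient.mk _ (Polynomial.aeval (MvPolynomial.X e : MvPolynomial E ℂ)
            (q ↑β)) : stateRing w E) := by
  obtain ⟨g, hg⟩ := hi
  have h5 := congrArg (fun z : Polynomial ℂ =>
    (Ideal.Quotient.mk _ (Polynomial.aeval (MvPolynomial.X e : MvPolynomial E ℂ) z)
      : stateRing w E)) hg
  simp only [map_add, map_mul, map_sum, gen_zero w E e, zero_mul, add_zero] at h5
  rw [h5, ← Finset.sum_coe_sort S]
  refine Finset.sum_congr rfl fun β _ => ?_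
  rw [Polynomial.aeval_C, MvPolynomial.algebraMap_eq, ← map_mul,
    ← MvPolynomial.smul_eq_C_mul]
  rfl

variable (hi : ∀ p : Polynomial ℂ, ∃ g, p = (∑ β ∈ S, C (p.eval β) * q β) + derivative w * g)

include hi

lemma prodkey (p : E → Polynomial ℂ) :
    (Ideal.Quotient.mk _ (∏ e : E, Polynomial.aeval (MvPolynomial.X e : MvPolynomial E ℂ)
        (p e)) : stateRing w E)
      = ∑ φ : E → {x : ℂ // x ∈ S},
          (∏ e : E, (p e).eval ↑(φ e)) • Qstate w q E S φ := by
  rw [map_prod]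
  have h1 : ∀ e : E,
      (Ideal.Quotient.mk _ (Polynomial.aeval (MvPolynomial.X e : MvPolynomial E ℂ) (p e))
        : stateRing w E)
      = ∑ β : {x : ℂ // x ∈ S}, ((p e).eval ↑β) •
          (Ideal.Quotient.mk _ (Polynomial.aeval (MvPolynomial.X e : MvPolynomial E ℂ)
            (q ↑β)) : stateRing w E) :=
    fun e => key w S q E e (p e) (hi (p e))
  rw [Finset.prod_congr rfl fun e _ => h1 e, Finset.prod_univ_sum]
  refine Finset.sum_congr
    (by simp only [Finset.attach_eq_univ, Fintype.piFinset_univ]) fun φ _ => ?_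
  rw [prod_smul_c, Qstate, map_prod]

lemma span_top :
    Submodule.span ℂ (Set.range (Qstate w q E S)) = ⊤ := by
  rw [eq_top_iff]
  rintro z -
  obtain ⟨P, rfl⟩ := Ideal.Quotient.mk_surjective z
  induction P using MvPolynomial.induction_on' with
  | add p1 p2 hp1 hp2 => rw [map_add]; exact Submodule.add_mem _ hp1 hp2
  | monomial d a =>
    have hm : (MvPolynomial.monomial d) a
        = a • ∏ e : E, Polynomial.aeval (MvPolynomial.X e : MvPolynomial E ℂ)
            ((X : Polynomial ℂ) ^ d e) := by
      rw [MvPolynomial.monomial_eq, MvPolynomial.smul_eq_C_mul]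
      congr 1
      rw [Finsupp.prod_fintype _ _ fun e => pow_zero _]
      exact Finset.prod_congr rfl fun e _ => by rw [map_pow, Polynomial.aeval_X]
    have hsm : (Ideal.Quotient.mk _ ((MvPolynomial.monomial d) a) : stateRing w E)
        = a • (Ideal.Quotient.mk _ (∏ e : E,
            Polynomial.aeval (MvPolynomial.X e : MvPolynomial E ℂ)
              ((X : Polynomial ℂ) ^ d e)) : stateRing w E) := by
      rw [hm]; rfl
    rw [hsm, prodkey w S q E hi]
    refine Submodule.smul_mem _ _ (Submodule.sum_mem _ fun φ _ =>
      Submodule.smul_mem _ _ (Submodule.subset_span ⟨φ, rfl⟩))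

end MultiVar

section Eval
variable (w : Polynomial ℂ) (S : Finset ℂ)
  (E : Type) (hroot : ∀ α ∈ S, (derivative w).eval α = 0)

include hroot in
/-- Evaluation of `R_E` at a point of `S^E`. -/
noncomputable def evAt (ψ : E → {x : ℂ // x ∈ S}) : stateRing w E →ₐ[ℂ] ℂ :=
  Ideal.Quotient.liftₐ _ (MvPolynomial.aeval fun e => (ψ e : ℂ)) (by
    intro a ha
    refine (Ideal.span_le (I := RingHom.ker (MvPolynomial.aeval
      (R := ℂ) fun e => (ψ e : ℂ)).toRingHom)).2 ?_ ha
    rintro _ ⟨e, rfl⟩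
    rw [SetLike.mem_coe, RingHom.mem_ker]
    have h6 : (MvPolynomial.aeval fun e : E => (ψ e : ℂ))
        (Polynomial.aeval (MvPolynomial.X e : MvPolynomial E ℂ) (derivative w))
        = Polynomial.aeval ((ψ e : ℂ)) (derivative w) := by
      rw [← Polynomial.aeval_algHom_apply]
      simp
    exact h6.trans (by
      rw [Polynomial.aeval_def, ← Polynomial.eval_map, Algebra.algebraMap_self,
        Polynomial.map_id]
      exact hroot _ (ψ e).2))

lemma evAt_mk (ψ : E → {x : ℂ // x ∈ S}) (P : MvPolynomial E ℂ) :
    evAt w S E hroot ψ (Ideal.Quotient.mk _ P)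
      = MvPolynomial.aeval (fun e => (ψ e : ℂ)) P :=
  Ideal.Quotient.liftₐ_apply _ _ _ _

end Eval

/-- The family `(Q_φ)`, indexed by all states `φ : E → Σₙ`, is a basis of
`R_E` as a `ℂ`-vector space; in particular `dim_ℂ R_E = n^{|E|}`. -/
theorem stmt_6 (n : ℕ) (hn : 1 ≤ n) (w : Polynomial ℂ) (hw : w.Monic)
    (hdeg : w.natDegree = n + 1) (S : Finset ℂ) (hcard : S.card = n)
    (hder : derivative w = C ((n : ℂ) + 1) * ∏ α ∈ S, (X - C α))
    (q : ℂ → Polynomial ℂ)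
    (hq : ∀ β ∈ S,
      (X - C β) * (C (((n : ℂ) + 1) * ∏ α ∈ S.erase β, (β - α)) * q β) = derivative w)
    (E : Type) [Fintype E] [DecidableEq E] :
    (∃ b : Module.Basis (E → {x : ℂ // x ∈ S}) ℂ (stateRing w E),
      ∀ φ : E → {x : ℂ // x ∈ S}, b φ = Qstate w q E S φ) ∧
    Module.finrank ℂ (stateRing w E) = n ^ Fintype.card E := by
  classical
  have hi := interp n w S hder q hq
  have hroot : ∀ α ∈ S, (derivative w).eval α = 0 := by
    intro α hα
    rw [hder, eval_mul, eval_prod,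
      Finset.prod_eq_zero hα (by simp : Polynomial.eval α (X - C α) = 0), mul_zero]
  set ev := evAt w S E hroot with hev
  have hqe := q_eval n w S hder q hq
  have hevQ : ∀ ψ φ : E → {x : ℂ // x ∈ S},
      ev ψ (Qstate w q E S φ) = if φ = ψ then 1 else 0 := by
    intro ψ φ
    rw [hev, Qstate, evAt_mk, map_prod]
    have hterm : ∀ e : E,
        (MvPolynomial.aeval fun e : E => ((ψ e : ℂ)))
          (Polynomial.aeval (MvPolynomial.X e : MvPolynomial E ℂ) (q ↑(φ e)))
        = if φ e = ψ e then 1 else 0 := by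
      intro e
      rw [← Polynomial.aeval_algHom_apply]
      simp only [MvPolynomial.aeval_X]
      rw [Polynomial.aeval_def, ← Polynomial.eval_map, Algebra.algebraMap_self,
        Polynomial.map_id, hqe (↑(ψ e)) (↑(φ e)) (ψ e).2 (φ e).2]
      by_cases h : φ e = ψ e
      · rw [if_pos (by rw [h]), if_pos h]
      · rw [if_neg fun hc => h (Subtype.ext hc.symm), if_neg h]
    rw [Finset.prod_congr rfl fun e _ => hterm e]
    by_cases h : φ = ψ
    · subst h; simp
    · obtain ⟨e, he⟩ := Function.ne_iff.1 h
      rw [if_neg h]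
      exact Finset.prod_eq_zero (Finset.mem_univ e) (if_neg he)
  let T : ((E → {x : ℂ // x ∈ S}) → ℂ) →ₗ[ℂ] stateRing w E :=
    { toFun := fun f => ∑ φ, f φ • Qstate w q E S φ
      map_add' := fun f g => by simp [add_smul, Finset.sum_add_distrib]
      map_smul' := fun c f => by simp [Finset.smul_sum, smul_smul] }
  have hT : ∀ φ, T (Pi.single φ 1) = Qstate w q E S φ := by
    intro φ
    show ∑ φ', Pi.single φ 1 φ' • Qstate w q E S φ' = Qstate w q E S φ
    rw [Finset.sum_eq_single φ]
    · simp
    · intro b _ hb; rw [Pi.single_eq_of_ne hb, zero_smul]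
    · intro h; exact absurd (Finset.mem_univ φ) h
  have hleft : ∀ f, (fun ψ => ev ψ (T f)) = f := by
    intro f; funext ψ
    show ev ψ (∑ φ, f φ • Qstate w q E S φ) = f ψ
    rw [map_sum]
    have hterm : ∀ φ ∈ Finset.univ,
        ev ψ (f φ • Qstate w q E S φ) = if φ = ψ then f φ else 0 := by
      intro φ _
      rw [map_smul, hevQ]
      split_ifs <;> simp
    rw [Finset.sum_congr rfl hterm, Finset.sum_ite_eq' Finset.univ ψ,
      if_pos (Finset.mem_univ ψ)]
  have hinj : Function.Injective T := fun a b hab => by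
    rw [← hleft a, ← hleft b, hab]
  have hsurj : Function.Surjective T := by
    rw [← LinearMap.range_eq_top, ← top_le_iff, ← span_top w S q E hi,
      Submodule.span_le]
    rintro _ ⟨φ, rfl⟩
    exact ⟨Pi.single φ 1, hT φ⟩
  let eqv := LinearEquiv.ofBijective T ⟨hinj, hsurj⟩
  constructor
  · refine ⟨(Pi.basisFun ℂ _).map eqv, fun φ => ?_⟩
    rw [Module.Basis.map_apply, Pi.basisFun_apply]
    exact hT φ
  · rw [← eqv.finrank_eq, Module.finrank_pi, Fintype.card_fun, Fintype.card_coe, hcard]
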